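/- Relative-energy coercivity under equal mass (the key estimate in the proof of the a priori bounds, Lemma 5.1 of the paper): Let γ > 1. There exists a constant C ≥ 1, depending only on γ, such that for every measure space (X, μ) with 0 < μ(X) < ∞ and all measurable ρ, ρ̄ : X → [0,∞) with ρ, ρ̄ ∈ L^γ(μ) and ∫_X ρ dμ = ∫_X ρ̄ dμ, setting m = μ(X)^{−1} ∫_X ρ dμ, one has ∫_X (ρ^γ − ρ̄^γ) dμ ≥ C^{−1} ∫_X |ρ^{γ/2} − m^{γ/2}|² dμ − C ∫_X |ρ̄^{γ/2} − m^{γ/2}|² dμ. -/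

import Mathlib

open MeasureTheory Set

noncomputable section

open Real


lemma nonneg_of_deriv_Ici (f f' : ℝ → ℝ)
    (hd : ∀ x ∈ Ici (1:ℝ), HasDerivAt f (f' x) x) (h1 : f 1 = 0)
    (h' : ∀ x ∈ Ici (1:ℝ), 0 ≤ f' x) : ∀ x, 1 ≤ x → 0 ≤ f x := by
  have mono : MonotoneOn f (Ici 1) := by
    apply monotoneOn_of_deriv_nonneg (convex_Ici 1)
    · exact fun x hx => (hd x hx).continuousAt.continuousWithinAt
    · intro x hx
      rw [interior_Ici] at hx
      exact ((hd x (mem_Ici.mpr (le_of_lt hx))).differentiableAt).differentiableWithinAt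
    · intro x hx
      rw [interior_Ici] at hx
      rw [(hd x (mem_Ici.mpr (le_of_lt hx))).deriv]
      exact h' x (mem_Ici.mpr (le_of_lt hx))
  intro x hx
  calc (0:ℝ) = f 1 := h1.symm
    _ ≤ f x := mono (by norm_num) hx hx

lemma nonneg_of_deriv_Icc (f f' : ℝ → ℝ)
    (hd : ∀ x ∈ Icc (0:ℝ) 1, HasDerivAt f (f' x) x) (h1 : f 1 = 0)
    (h' : ∀ x ∈ Icc (0:ℝ) 1, f' x ≤ 0) : ∀ x ∈ Icc (0:ℝ) 1, 0 ≤ f x := by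
  have anti : AntitoneOn f (Icc 0 1) := by
    apply antitoneOn_of_deriv_nonpos (convex_Icc 0 1)
    · exact fun x hx => (hd x hx).continuousAt.continuousWithinAt
    · intro x hx
      rw [interior_Icc] at hx
      exact ((hd x (Ioo_subset_Icc_self hx)).differentiableAt).differentiableWithinAt
    · intro x hx
      rw [interior_Icc] at hx
      rw [(hd x (Ioo_subset_Icc_self hx)).deriv]
      exact h' x (Ioo_subset_Icc_self hx)
  intro x hx
  calc (0:ℝ) = f 1 := h1.symm
    _ ≤ f x := anti hx (by norm_num) hx.2


-- L1: γ ≥ 2, lower bound with constant 1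
lemma L1 {γ s : ℝ} (hγ : 2 ≤ γ) (hs : 0 ≤ s) :
    (s ^ (γ/2) - 1) ^ 2 ≤ s ^ γ - 1 - γ * (s - 1) := by
  have hb : 1 + (γ/2) * (s - 1) ≤ s ^ (γ/2) := by
    have := one_add_mul_self_le_rpow_one_add (by linarith : (-1:ℝ) ≤ s - 1)
      (by linarith : (1:ℝ) ≤ γ/2)
    simpa using this
  have hsq : s ^ (γ/2) * s ^ (γ/2) = s ^ γ := by
    rw [← Real.rpow_add' hs (by linarith)]
    norm_num
  nlinarith [hb, hsq]

-- L2: γ ≤ 2, upper bound with constant 1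
lemma L2 {γ s : ℝ} (hγ1 : 1 < γ) (hγ : γ ≤ 2) (hs : 0 ≤ s) :
    s ^ γ - 1 - γ * (s - 1) ≤ (s ^ (γ/2) - 1) ^ 2 := by
  have hb : s ^ (γ/2) ≤ 1 + (γ/2) * (s - 1) := by
    have := rpow_one_add_le_one_add_mul_self (by linarith : (-1:ℝ) ≤ s - 1)
      (by linarith : (0:ℝ) ≤ γ/2) (by linarith : γ/2 ≤ 1)
    simpa using this
  have hsq : s ^ (γ/2) * s ^ (γ/2) = s ^ γ := by
    rw [← Real.rpow_add' hs (by linarith)]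
    norm_num
  nlinarith [hb, hsq]

-- L3: γ ≥ 2, upper bound on [0,1]
lemma L3 {γ : ℝ} (hγ : 2 ≤ γ) :
    ∀ s ∈ Icc (0:ℝ) 1, 2 * (s ^ γ - 1 - γ * (s - 1)) ≤ γ * (γ - 1) * (1 - s) ^ 2 := by
  have key := nonneg_of_deriv_Icc
    (fun s => γ * (γ - 1) * (1 - s) ^ 2 - 2 * (s ^ γ - 1 - γ * (s - 1)))
    (fun x => γ * (γ - 1) * (2 * (1 - x) ^ 1 * (-1)) - 2 * (γ * x ^ (γ - 1) - γ))
    (by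
      intro x hx
      have hp : HasDerivAt (fun s : ℝ => s ^ γ) (γ * x ^ (γ - 1)) x :=
        Real.hasDerivAt_rpow_const (Or.inr (by linarith))
      have h2 : HasDerivAt (fun s : ℝ => (1 - s) ^ 2) (2 * (1 - x) ^ 1 * (-1)) x := by
        simpa [Pi.pow_def] using (((hasDerivAt_id x).const_sub 1).pow 2)
      have := (h2.const_mul (γ * (γ - 1))).sub
        (((hp.sub_const 1).sub (((hasDerivAt_id x).sub_const 1).const_mul γ)).const_mul 2)
      convert this using 1
      · rfl
      · rfl
      · funext y; simp only [Pi.sub_apply, Pi.pow_apply, id]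
      · ring)
    (by norm_num)
    (by
      intro x hx
      have hb : 1 + (γ - 1) * (x - 1) ≤ x ^ (γ - 1) := by
        have := one_add_mul_self_le_rpow_one_add (by linarith [hx.1] : (-1:ℝ) ≤ x - 1)
          (by linarith : (1:ℝ) ≤ γ - 1)
        simpa using this
      nlinarith [mul_le_mul_of_nonneg_left hb (by linarith : (0:ℝ) ≤ γ)])
  intro s hs
  have := key s hs
  linarith

-- L5: 1 < γ ≤ 2, lower bound on [0,1]
lemma L5 {γ : ℝ} (hγ1 : 1 < γ) (hγ : γ ≤ 2) :
    ∀ s ∈ Icc (0:ℝ) 1, γ * (γ - 1) * (1 - s) ^ 2 ≤ 2 * (s ^ γ - 1 - γ * (s - 1)) := by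
  have key := nonneg_of_deriv_Icc
    (fun s => 2 * (s ^ γ - 1 - γ * (s - 1)) - γ * (γ - 1) * (1 - s) ^ 2)
    (fun x => 2 * (γ * x ^ (γ - 1) - γ) - γ * (γ - 1) * (2 * (1 - x) ^ 1 * (-1)))
    (by
      intro x hx
      have hp : HasDerivAt (fun s : ℝ => s ^ γ) (γ * x ^ (γ - 1)) x :=
        Real.hasDerivAt_rpow_const (Or.inr (by linarith))
      have h2 : HasDerivAt (fun s : ℝ => (1 - s) ^ 2) (2 * (1 - x) ^ 1 * (-1)) x := by
        simpa [Pi.pow_def] using (((hasDerivAt_id x).const_sub 1).pow 2)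
      have := (((hp.sub_const 1).sub (((hasDerivAt_id x).sub_const 1).const_mul γ)).const_mul 2).sub
        (h2.const_mul (γ * (γ - 1)))
      convert this using 1
      · rfl
      · rfl
      · funext y; simp only [Pi.sub_apply, Pi.pow_apply, id]
      · ring)
    (by norm_num)
    (by
      intro x hx
      have hb : x ^ (γ - 1) ≤ 1 + (γ - 1) * (x - 1) := by
        have := rpow_one_add_le_one_add_mul_self (by linarith [hx.1] : (-1:ℝ) ≤ x - 1)
          (by linarith : (0:ℝ) ≤ γ - 1) (by linarith : γ - 1 ≤ 1)
        simpa using this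
      nlinarith [mul_le_mul_of_nonneg_left hb (by linarith : (0:ℝ) ≤ γ)])
  intro s hs
  have := key s hs
  linarith

-- L4: γ ≥ 2, upper bound on [1,∞): f ≤ 2 (s^p - 1)^2
lemma L4 {γ : ℝ} (hγ : 2 ≤ γ) :
    ∀ s : ℝ, 1 ≤ s → s ^ γ - 1 - γ * (s - 1) ≤ 2 * (s ^ (γ/2) - 1) ^ 2 := by
  have key := nonneg_of_deriv_Ici
    (fun s => 2 * (s ^ (γ/2) - 1) ^ 2 - (s ^ γ - 1 - γ * (s - 1)))
    (fun x => 2 * (2 * (x ^ (γ/2) - 1) ^ 1 * (γ/2 * x ^ (γ/2 - 1))) - (γ * x ^ (γ - 1) - γ))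
    (by
      intro x hx
      have hp : HasDerivAt (fun s : ℝ => s ^ γ) (γ * x ^ (γ - 1)) x :=
        Real.hasDerivAt_rpow_const (Or.inr (by linarith))
      have hq : HasDerivAt (fun s : ℝ => s ^ (γ/2)) (γ/2 * x ^ (γ/2 - 1)) x :=
        Real.hasDerivAt_rpow_const (Or.inr (by linarith))
      have := (((hq.sub_const 1).pow 2).const_mul 2).sub
        ((hp.sub_const 1).sub (((hasDerivAt_id x).sub_const 1).const_mul γ))
      convert this using 1
      · rfl
      · rfl
      · funext y; simp only [Pi.sub_apply, Pi.pow_apply, id]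
      · ring)
    (by norm_num)
    (by
      intro x hx
      simp only [mem_Ici] at hx
      have hx0 : (0:ℝ) < x := by linarith
      have ha1 : (1:ℝ) ≤ x ^ (γ/2 - 1) := Real.one_le_rpow hx (by linarith)
      have hab : x ^ (γ/2 - 1) ≤ x ^ (γ/2) :=
        Real.rpow_le_rpow_of_exponent_le hx (by linarith)
      have hprod : x ^ (γ/2 - 1) * x ^ (γ/2) = x ^ (γ - 1) := by
        rw [← Real.rpow_add hx0]
        congr 1
        ring
      nlinarith [sq_nonneg (x ^ (γ/2 - 1) - 1),
        mul_nonneg (by linarith : (0:ℝ) ≤ x ^ (γ/2 - 1))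
          (by linarith : (0:ℝ) ≤ x ^ (γ/2) - x ^ (γ/2 - 1)), hprod])
  intro s hs
  have := key s hs
  linarith

-- LA: 1 < γ ≤ 2, auxiliary on [1,∞)
lemma LA {γ : ℝ} (hγ1 : 1 < γ) (hγ : γ ≤ 2) :
    ∀ s : ℝ, 1 ≤ s → 2 * (γ - 1) * (s ^ (γ/2) - 1) ≤ γ * (s ^ (γ/2) - s ^ (1 - γ/2)) := by
  have key := nonneg_of_deriv_Ici
    (fun s => γ * (s ^ (γ/2) - s ^ (1 - γ/2)) - 2 * (γ - 1) * (s ^ (γ/2) - 1))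
    (fun x => γ * (γ/2 * x ^ (γ/2 - 1) - (1 - γ/2) * x ^ (1 - γ/2 - 1))
      - 2 * (γ - 1) * (γ/2 * x ^ (γ/2 - 1)))
    (by
      intro x hx
      simp only [mem_Ici] at hx
      have hx0 : x ≠ 0 := by intro h; rw [h] at hx; linarith
      have hq : HasDerivAt (fun s : ℝ => s ^ (γ/2)) (γ/2 * x ^ (γ/2 - 1)) x :=
        Real.hasDerivAt_rpow_const (Or.inl hx0)
      have hr : HasDerivAt (fun s : ℝ => s ^ (1 - γ/2)) ((1 - γ/2) * x ^ (1 - γ/2 - 1)) x :=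
        Real.hasDerivAt_rpow_const (Or.inl hx0)
      have := ((hq.sub hr).const_mul γ).sub ((hq.sub_const 1).const_mul (2 * (γ - 1)))
      convert this using 1
      · rfl
      · rfl
      · funext y; simp only [Pi.sub_apply, Pi.pow_apply, id])
    (by norm_num)
    (by
      intro x hx
      simp only [mem_Ici] at hx
      have hA0 : (0:ℝ) ≤ x ^ (γ/2 - 1) := Real.rpow_nonneg (by linarith) _
      have hBA : x ^ (1 - γ/2 - 1) ≤ x ^ (γ/2 - 1) :=
        Real.rpow_le_rpow_of_exponent_le hx (by linarith)
      nlinarith [mul_nonneg (mul_nonneg (by linarith : (0:ℝ) ≤ γ)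
        (by linarith : (0:ℝ) ≤ 1 - γ/2))
        (by linarith : (0:ℝ) ≤ x ^ (γ/2 - 1) - x ^ (1 - γ/2 - 1))])
  intro s hs
  have := key s hs
  linarith

-- LB: 1 < γ ≤ 2, lower bound on [1,∞): 2(γ-1)(s^p-1)² ≤ γ f
lemma LB {γ : ℝ} (hγ1 : 1 < γ) (hγ : γ ≤ 2) :
    ∀ s : ℝ, 1 ≤ s → 2 * (γ - 1) * (s ^ (γ/2) - 1) ^ 2 ≤ γ * (s ^ γ - 1 - γ * (s - 1)) := by
  have key := nonneg_of_deriv_Ici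
    (fun s => γ * (s ^ γ - 1 - γ * (s - 1)) - 2 * (γ - 1) * (s ^ (γ/2) - 1) ^ 2)
    (fun x => γ * (γ * x ^ (γ - 1) - γ)
      - 2 * (γ - 1) * (2 * (x ^ (γ/2) - 1) ^ 1 * (γ/2 * x ^ (γ/2 - 1))))
    (by
      intro x hx
      simp only [mem_Ici] at hx
      have hx0 : x ≠ 0 := by intro h; rw [h] at hx; linarith
      have hp : HasDerivAt (fun s : ℝ => s ^ γ) (γ * x ^ (γ - 1)) x :=
        Real.hasDerivAt_rpow_const (Or.inr (by linarith))
      have hq : HasDerivAt (fun s : ℝ => s ^ (γ/2)) (γ/2 * x ^ (γ/2 - 1)) x :=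
        Real.hasDerivAt_rpow_const (Or.inl hx0)
      have := (((hp.sub_const 1).sub (((hasDerivAt_id x).sub_const 1).const_mul γ)).const_mul γ).sub
        (((hq.sub_const 1).pow 2).const_mul (2 * (γ - 1)))
      convert this using 1
      · rfl
      · rfl
      · funext y; simp only [Pi.sub_apply, Pi.pow_apply, id]
      · ring)
    (by norm_num)
    (by
      intro x hx
      simp only [mem_Ici] at hx
      have hx0 : (0:ℝ) < x := by linarith
      have hA0 : (0:ℝ) ≤ x ^ (γ/2 - 1) := Real.rpow_nonneg (by linarith) _
      have hla := LA hγ1 hγ x hx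
      have hab : x ^ (γ/2 - 1) * x ^ (γ/2) = x ^ (γ - 1) := by
        rw [← Real.rpow_add hx0]; congr 1; ring
      have had : x ^ (γ/2 - 1) * x ^ (1 - γ/2) = 1 := by
        rw [← Real.rpow_add hx0]
        norm_num
      have h2 : x ^ (γ/2 - 1) * (γ * (x ^ (γ/2) - x ^ (1 - γ/2))) = γ * (x ^ (γ - 1) - 1) := by
        linear_combination γ * hab - γ * had
      have hmul := (mul_le_mul_of_nonneg_left hla hA0).trans_eq h2
      have hfin := mul_le_mul_of_nonneg_left hmul (by linarith : (0:ℝ) ≤ γ)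
      nlinarith [hfin])
  intro s hs
  have := key s hs
  linarith

noncomputable def Cgam (γ : ℝ) : ℝ := γ^2 + 2 + 2/(γ*(γ-1)) + γ/(2*(γ-1))

lemma Cgam_facts {γ : ℝ} (hγ : 1 < γ) :
    1 ≤ Cgam γ ∧ 2 ≤ Cgam γ ∧ γ*(γ-1)/2 ≤ Cgam γ ∧
    (Cgam γ)⁻¹ ≤ 1 ∧ (Cgam γ)⁻¹ ≤ γ*(γ-1)/2 ∧ (Cgam γ)⁻¹ ≤ 2*(γ-1)/γ := by
  have h1 : (0:ℝ) < γ - 1 := by linarith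
  have h2 : (0:ℝ) < γ := by linarith
  have h3 : (0:ℝ) < γ*(γ-1) := by positivity
  have h4 : (0:ℝ) < 2/(γ*(γ-1)) := by positivity
  have h5 : (0:ℝ) < γ/(2*(γ-1)) := by positivity
  have hγ2 : (1:ℝ) ≤ γ^2 := by nlinarith
  have hC1 : 1 ≤ Cgam γ := by unfold Cgam; linarith
  have hC0 : 0 < Cgam γ := by linarith
  refine ⟨hC1, by unfold Cgam; linarith, by unfold Cgam; nlinarith, ?_, ?_, ?_⟩
  · rw [inv_le_one_iff₀]; right; exact hC1
  · have hx : (0:ℝ) < γ*(γ-1)/2 := by positivity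
    have : (γ*(γ-1)/2)⁻¹ ≤ Cgam γ := by
      rw [show (γ*(γ-1)/2)⁻¹ = 2/(γ*(γ-1)) by rw [inv_div]]
      unfold Cgam; linarith
    calc (Cgam γ)⁻¹ ≤ ((γ*(γ-1)/2)⁻¹)⁻¹ := by
          apply inv_anti₀ (by positivity) this
      _ = γ*(γ-1)/2 := inv_inv _
  · have hx : (0:ℝ) < 2*(γ-1)/γ := by positivity
    have : (2*(γ-1)/γ)⁻¹ ≤ Cgam γ := by
      rw [show (2*(γ-1)/γ)⁻¹ = γ/(2*(γ-1)) by rw [inv_div]]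
      unfold Cgam; linarith
    calc (Cgam γ)⁻¹ ≤ ((2*(γ-1)/γ)⁻¹)⁻¹ := by
          apply inv_anti₀ (by positivity) this
      _ = 2*(γ-1)/γ := inv_inv _

lemma norm_lower {γ : ℝ} (hγ : 1 < γ) {s : ℝ} (hs : 0 ≤ s) :
    (Cgam γ)⁻¹ * (s ^ (γ/2) - 1) ^ 2 ≤ s ^ γ - 1 - γ * (s - 1) := by
  obtain ⟨hC1, hC2, hCM, hCi1, hCiM, hCic⟩ := Cgam_facts hγ
  rcases le_or_gt 2 γ with h2 | h2
  · have := L1 h2 hs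
    nlinarith [sq_nonneg (s ^ (γ/2) - 1)]
  · rcases le_or_gt s 1 with hs1 | hs1
    · have hL5 := L5 hγ h2.le s ⟨hs, hs1⟩
      have hsp : s ≤ s ^ (γ/2) := by
        rcases eq_or_lt_of_le hs with h | h
        · rw [← h, Real.zero_rpow (by positivity)]
        · calc s = s ^ (1:ℝ) := (Real.rpow_one s).symm
            _ ≤ s ^ (γ/2) := Real.rpow_le_rpow_of_exponent_ge h hs1 (by linarith)
      have hsp1 : s ^ (γ/2) ≤ 1 := Real.rpow_le_one hs hs1 (by positivity)
      have hsqc : (s ^ (γ/2) - 1)^2 ≤ (1 - s)^2 := by nlinarith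
      calc (Cgam γ)⁻¹ * (s ^ (γ/2) - 1) ^ 2
          ≤ (γ*(γ-1)/2) * (s ^ (γ/2) - 1) ^ 2 :=
            mul_le_mul_of_nonneg_right hCiM (sq_nonneg _)
        _ ≤ (γ*(γ-1)/2) * (1 - s) ^ 2 := by
            apply mul_le_mul_of_nonneg_left hsqc (by nlinarith)
        _ ≤ s ^ γ - 1 - γ * (s - 1) := by linarith
    · have hLB := LB hγ h2.le s hs1.le
      have h1 : (Cgam γ)⁻¹ * (s ^ (γ/2) - 1) ^ 2 ≤ 2*(γ-1)/γ * (s ^ (γ/2) - 1) ^ 2 :=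
        mul_le_mul_of_nonneg_right hCic (sq_nonneg _)
      have h2' : 2*(γ-1)/γ * (s ^ (γ/2) - 1) ^ 2 ≤ s ^ γ - 1 - γ * (s - 1) := by
        rw [div_mul_eq_mul_div, div_le_iff₀ (by linarith : (0:ℝ) < γ)]
        nlinarith [hLB]
      linarith

lemma norm_upper {γ : ℝ} (hγ : 1 < γ) {s : ℝ} (hs : 0 ≤ s) :
    s ^ γ - 1 - γ * (s - 1) ≤ Cgam γ * (s ^ (γ/2) - 1) ^ 2 := by
  obtain ⟨hC1, hC2, hCM, hCi1, hCiM, hCic⟩ := Cgam_facts hγ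
  rcases le_or_gt 2 γ with h2 | h2
  · rcases le_or_gt s 1 with hs1 | hs1
    · have hL3 := L3 h2 s ⟨hs, hs1⟩
      have hsp : s ^ (γ/2) ≤ s := by
        rcases eq_or_lt_of_le hs with h | h
        · rw [← h, Real.zero_rpow (by positivity)]
        · calc s ^ (γ/2) ≤ s ^ (1:ℝ) :=
              Real.rpow_le_rpow_of_exponent_ge h hs1 (by linarith)
            _ = s := Real.rpow_one s
      have hsqc : (1 - s)^2 ≤ (s ^ (γ/2) - 1)^2 := by
        nlinarith [Real.rpow_nonneg hs (γ/2)]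
      calc s ^ γ - 1 - γ * (s - 1) ≤ (γ*(γ-1)/2) * (1-s)^2 := by linarith
        _ ≤ (γ*(γ-1)/2) * (s ^ (γ/2) - 1)^2 := by
            apply mul_le_mul_of_nonneg_left hsqc (by nlinarith)
        _ ≤ Cgam γ * (s ^ (γ/2) - 1)^2 :=
            mul_le_mul_of_nonneg_right hCM (sq_nonneg _)
    · have hL4 := L4 h2 s hs1.le
      nlinarith [sq_nonneg (s ^ (γ/2) - 1)]
  · have := L2 hγ h2.le hs
    nlinarith [sq_nonneg (s ^ (γ/2) - 1)]

lemma key_scaled {γ : ℝ} (hγ : 1 < γ) {t m : ℝ} (ht : 0 ≤ t) (hm : 0 ≤ m) :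
    (Cgam γ)⁻¹ * (t ^ (γ/2) - m ^ (γ/2)) ^ 2
        ≤ t ^ γ - m ^ γ - γ * m ^ (γ-1) * (t - m) ∧
      t ^ γ - m ^ γ - γ * m ^ (γ-1) * (t - m)
        ≤ Cgam γ * (t ^ (γ/2) - m ^ (γ/2)) ^ 2 := by
  obtain ⟨hC1, hC2, hCM, hCi1, hCiM, hCic⟩ := Cgam_facts hγ
  rcases eq_or_lt_of_le hm with hm0 | hm'
  · -- m = 0
    rw [← hm0, Real.zero_rpow (by positivity : γ/2 ≠ 0),
      Real.zero_rpow (by positivity : γ ≠ 0),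
      Real.zero_rpow (sub_ne_zero.mpr (by linarith : γ ≠ 1))]
    have htt : t ^ (γ/2) * t ^ (γ/2) = t ^ γ := by
      rw [← Real.rpow_add' ht (by positivity)]
      norm_num
    have htγ : 0 ≤ t ^ γ := Real.rpow_nonneg ht γ
    constructor <;> nlinarith
  · -- m > 0
    set s := t / m with hs_def
    have hs : 0 ≤ s := div_nonneg ht hm'.le
    have hts : t = m * s := by rw [hs_def]; field_simp
    have hpp : m ^ (γ/2) * m ^ (γ/2) = m ^ γ := by
      rw [← Real.rpow_add' hm (by positivity)]
      norm_num
    have hm1 : m ^ (γ-1) * m = m ^ γ := by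
      have h := Real.rpow_add' hm (show (γ-1) + 1 ≠ 0 by linarith)
      rw [Real.rpow_one] at h
      rw [← h]; norm_num
    have hsq : (t ^ (γ/2) - m ^ (γ/2)) ^ 2 = m ^ γ * (s ^ (γ/2) - 1) ^ 2 := by
      rw [hts, Real.mul_rpow hm'.le hs]
      linear_combination (s ^ (γ/2) - 1)^2 * hpp
    have hmid : t ^ γ - m ^ γ - γ * m ^ (γ-1) * (t - m)
        = m ^ γ * (s ^ γ - 1 - γ * (s - 1)) := by
      rw [hts, Real.mul_rpow hm'.le hs]
      linear_combination (-(γ * (s-1))) * hm1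
    have hmγ : 0 ≤ m ^ γ := Real.rpow_nonneg hm'.le γ
    rw [hsq, hmid]
    constructor
    · calc (Cgam γ)⁻¹ * (m ^ γ * (s ^ (γ/2) - 1) ^ 2)
          = m ^ γ * ((Cgam γ)⁻¹ * (s ^ (γ/2) - 1) ^ 2) := by ring
        _ ≤ m ^ γ * (s ^ γ - 1 - γ * (s - 1)) :=
            mul_le_mul_of_nonneg_left (norm_lower hγ hs) hmγ
    · calc m ^ γ * (s ^ γ - 1 - γ * (s - 1))
          ≤ m ^ γ * (Cgam γ * (s ^ (γ/2) - 1) ^ 2) :=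
            mul_le_mul_of_nonneg_left (norm_upper hγ hs) hmγ
        _ = Cgam γ * (m ^ γ * (s ^ (γ/2) - 1) ^ 2) := by ring

lemma pt_le {γ t : ℝ} (hγ : 1 < γ) (ht : 0 ≤ t) {q : ℝ} (hq0 : 0 ≤ q) (hqγ : q ≤ γ) :
    t ^ q ≤ 1 + t ^ γ := by
  rcases le_or_gt t 1 with h | h
  · have h1 : t ^ q ≤ 1 := Real.rpow_le_one ht h hq0
    have h2 : 0 ≤ t ^ γ := Real.rpow_nonneg ht γ
    linarith
  · have h1 : t ^ q ≤ t ^ γ := Real.rpow_le_rpow_of_exponent_le h.le hqγ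
    have h2 : (0:ℝ) ≤ 1 := zero_le_one
    linarith [Real.rpow_nonneg ht q]

lemma aux_int {X : Type*} [MeasurableSpace X] {μ : Measure X} [IsFiniteMeasure μ]
    {γ : ℝ} (hγ : 1 < γ) {f : X → ℝ} (hfm : Measurable f) (hf0 : ∀ x, 0 ≤ f x)
    (hLp : MemLp f (ENNReal.ofReal γ) μ) :
    Integrable (fun x => f x ^ γ) μ ∧ Integrable f μ ∧
      Integrable (fun x => f x ^ (γ/2)) μ := by
  have hγ0 : (0:ℝ) < γ := by linarith
  have i1 : Integrable (fun x => f x ^ γ) μ := by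
    have h := hLp.integrable_norm_rpow
      (by simp [ENNReal.ofReal_eq_zero]; linarith) ENNReal.ofReal_ne_top
    rw [ENNReal.toReal_ofReal hγ0.le] at h
    have : (fun x => ‖f x‖ ^ γ) = fun x => f x ^ γ :=
      funext fun x => by rw [Real.norm_eq_abs, abs_of_nonneg (hf0 x)]
    rwa [this] at h
  have hmp : Measurable (fun x => f x ^ (γ/2)) := by
    have hc : Continuous (fun t : ℝ => t ^ (γ/2)) :=
      Continuous.rpow_const continuous_id (fun x => Or.inr (by positivity))
    exact hc.measurable.comp hfm
  refine ⟨i1, ?_, ?_⟩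
  · apply Integrable.mono' ((integrable_const (1:ℝ)).add i1) hfm.aestronglyMeasurable
    filter_upwards with x
    rw [Real.norm_eq_abs, abs_of_nonneg (hf0 x)]
    have := pt_le hγ (hf0 x) zero_le_one hγ.le
    simpa [Real.rpow_one] using this
  · apply Integrable.mono' ((integrable_const (1:ℝ)).add i1) hmp.aestronglyMeasurable
    filter_upwards with x
    rw [Real.norm_eq_abs, abs_of_nonneg (Real.rpow_nonneg (hf0 x) _)]
    exact pt_le hγ (hf0 x) (by positivity) (by linarith)

/-- Relative-energy coercivity under equal mass: for `γ > 1` there is `C ≥ 1`, depending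
only on `γ`, such that on any finite measure space, for nonnegative `ρ, ρ̄ ∈ L^γ` with the
same total mass and `m` the average of `ρ`,
`∫ (ρ^γ − ρ̄^γ) ≥ C⁻¹ ∫ |ρ^{γ/2} − m^{γ/2}|² − C ∫ |ρ̄^{γ/2} − m^{γ/2}|²`. -/
theorem relative_energy_coercivity (γ : ℝ) (hγ : 1 < γ) :
    ∃ C : ℝ, 1 ≤ C ∧
      ∀ (X : Type*) [MeasurableSpace X] (μ : Measure X),
        0 < μ univ → μ univ < ⊤ →
        ∀ ρ ρbar : X → ℝ, Measurable ρ → Measurable ρbar →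
          (∀ x, 0 ≤ ρ x) → (∀ x, 0 ≤ ρbar x) →
          MemLp ρ (ENNReal.ofReal γ) μ → MemLp ρbar (ENNReal.ofReal γ) μ →
          (∫ x, ρ x ∂μ) = (∫ x, ρbar x ∂μ) →
          C⁻¹ * (∫ x, |ρ x ^ (γ/2)
                  - ((μ univ).toReal⁻¹ * ∫ y, ρ y ∂μ) ^ (γ/2)| ^ 2 ∂μ)
              - C * (∫ x, |ρbar x ^ (γ/2)
                  - ((μ univ).toReal⁻¹ * ∫ y, ρ y ∂μ) ^ (γ/2)| ^ 2 ∂μ)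
            ≤ ∫ x, (ρ x ^ γ - ρbar x ^ γ) ∂μ := by
  refine ⟨Cgam γ, (Cgam_facts hγ).1, ?_⟩
  intro X _ μ hμpos hμfin ρ ρbar hρm hρbm hρ0 hρb0 hρLp hρbLp hmass
  haveI : IsFiniteMeasure μ := ⟨hμfin⟩
  obtain ⟨ia1, ia2, ia3⟩ := aux_int hγ hρm hρ0 hρLp
  obtain ⟨ib1, ib2, ib3⟩ := aux_int hγ hρbm hρb0 hρbLp
  set m : ℝ := (μ univ).toReal⁻¹ * ∫ y, ρ y ∂μ with hm_def
  have hm : 0 ≤ m :=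
    mul_nonneg (inv_nonneg.2 ENNReal.toReal_nonneg) (integral_nonneg hρ0)
  -- integrability of the squares
  have hsq_fun : ∀ (f : X → ℝ), (∀ x, 0 ≤ f x) →
      (fun x => (f x ^ (γ/2) - m ^ (γ/2))^2)
        = fun x => (f x ^ γ - 2*(m^(γ/2)) * f x ^ (γ/2)) + (m^(γ/2))^2 := by
    intro f hf0
    funext x
    have hpp : f x ^ (γ/2) * f x ^ (γ/2) = f x ^ γ := by
      rw [← Real.rpow_add' (hf0 x) (by positivity)]
      norm_num
    linear_combination hpp
  have hSρ : Integrable (fun x => (ρ x ^ (γ/2) - m ^ (γ/2))^2) μ := by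
    rw [hsq_fun ρ hρ0]
    exact (ia1.sub (ia3.const_mul _)).add (integrable_const _)
  have hSρb : Integrable (fun x => (ρbar x ^ (γ/2) - m ^ (γ/2))^2) μ := by
    rw [hsq_fun ρbar hρb0]
    exact (ib1.sub (ib3.const_mul _)).add (integrable_const _)
  have iGρ : Integrable (fun x => ρ x ^ γ - m^γ - γ*m^(γ-1)*(ρ x - m)) μ :=
    (ia1.sub (integrable_const _)).sub ((ia2.sub (integrable_const _)).const_mul _)
  have iGρb : Integrable (fun x => ρbar x ^ γ - m^γ - γ*m^(γ-1)*(ρbar x - m)) μ :=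
    (ib1.sub (integrable_const _)).sub ((ib2.sub (integrable_const _)).const_mul _)
  have hlow : (Cgam γ)⁻¹ * ∫ x, (ρ x ^ (γ/2) - m^(γ/2))^2 ∂μ
      ≤ ∫ x, (ρ x ^ γ - m^γ - γ*m^(γ-1)*(ρ x - m)) ∂μ := by
    rw [← integral_const_mul]
    exact integral_mono (hSρ.const_mul _) iGρ
      (fun x => (key_scaled hγ (hρ0 x) hm).1)
  have hup : ∫ x, (ρbar x ^ γ - m^γ - γ*m^(γ-1)*(ρbar x - m)) ∂μ
      ≤ Cgam γ * ∫ x, (ρbar x ^ (γ/2) - m^(γ/2))^2 ∂μ := by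
    rw [← integral_const_mul]
    exact integral_mono iGρb (hSρb.const_mul _)
      (fun x => (key_scaled hγ (hρb0 x) hm).2)
  have hGρ : ∫ x, (ρ x ^ γ - m^γ - γ*m^(γ-1)*(ρ x - m)) ∂μ
      = ∫ x, ρ x ^ γ ∂μ - (μ univ).toReal * m^γ
        - γ*m^(γ-1) * ((∫ x, ρ x ∂μ) - (μ univ).toReal * m) := by
    have e1 : Integrable (fun x => ρ x ^ γ - m^γ) μ := ia1.sub (integrable_const _)
    have e2 : Integrable (fun x => ρ x - m) μ := ia2.sub (integrable_const _)
    have e3 : Integrable (fun x => γ*m^(γ-1)*(ρ x - m)) μ := e2.const_mul _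
    rw [integral_sub e1 e3, integral_sub ia1 (integrable_const _), integral_const_mul,
      integral_sub ia2 (integrable_const _)]
    simp only [integral_const, smul_eq_mul, measureReal_def]
  have hGρb : ∫ x, (ρbar x ^ γ - m^γ - γ*m^(γ-1)*(ρbar x - m)) ∂μ
      = ∫ x, ρbar x ^ γ ∂μ - (μ univ).toReal * m^γ
        - γ*m^(γ-1) * ((∫ x, ρbar x ∂μ) - (μ univ).toReal * m) := by
    have e1 : Integrable (fun x => ρbar x ^ γ - m^γ) μ := ib1.sub (integrable_const _)
    have e2 : Integrable (fun x => ρbar x - m) μ := ib2.sub (integrable_const _)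
    have e3 : Integrable (fun x => γ*m^(γ-1)*(ρbar x - m)) μ := e2.const_mul _
    rw [integral_sub e1 e3, integral_sub ib1 (integrable_const _), integral_const_mul,
      integral_sub ib2 (integrable_const _)]
    simp only [integral_const, smul_eq_mul, measureReal_def]
  rw [← hmass] at hGρb
  have hsplit : ∫ x, (ρ x ^ γ - ρbar x ^ γ) ∂μ
      = (∫ x, ρ x ^ γ ∂μ) - ∫ x, ρbar x ^ γ ∂μ := integral_sub ia1 ib1
  simp only [sq_abs]
  rw [hsplit]
  linarith [hlow, hup, hGρ, hGρb]
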